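/- arXiv:1912.02453 — 2 statements merged into one kernel-verified Lean document; each statement's English description precedes it below -/
import Mathlib

section
/- Let S : X → ℝ^q on a normed space X satisfy: for every x ∈ X and ρ > 0 there exists L > 0 such that ‖S(x₁) − S(x₂)‖ ≤ L‖S(x₁ − x₂)‖ whenever ‖xᵢ − x‖ < ρ (i = 1,2). Suppose further there exists γ ∈ C¹([0,∞);ℝ) with γ(0) = 0 and ‖S(z(t))‖ ≤ γ(sup_{s≤t}‖ζ(s)‖) whenever z is a mild solution driven by input ζ. Then for two mild solutions x₁, x₂ driven by inputs ζ₁, ζ₂ that coincide up to time t and stay δ-close to a reference afterwards, one has for s ∈ [t, t+τ]: ‖S(x₁(s)) − S(x₂(s))‖ ≤ L·(sup_{σ∈[0,2δ]}|γ′(σ)|)·‖(ζ₁−ζ₂)|_{[t,t+τ]}‖_∞. -/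
/-- Step 3 of the proof of Theorem 2: combining the generalized
Lipschitz property of `S`, the BIBO bound `‖S(z(t))‖ ≤ γ(sup_{s≤t}‖ζ(s)‖)` with
`γ ∈ C¹`, `γ(0) = 0`, and linearity of the mild-solution map, two solutions driven by
inputs coinciding up to time `t` and staying `δ`-close afterwards satisfy
`‖S(x₁(s)) - S(x₂(s))‖ ≤ L ⬝ (sup_{[0,2δ]}|γ'|) ⬝ ‖(ζ₁-ζ₂)|_{[t,t+τ]}‖_∞` on `[t,t+τ]`. -/
theorem nonlinear_observation_Lipschitz_estimate
    {X : Type*} [NormedAddCommGroup X] [NormedSpace ℝ X]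
    (q ℓ : ℕ) (h t τ δ ρ L : ℝ)
    (hh : 0 ≤ h) (ht : 0 ≤ t) (hτ : 0 < τ) (hδ : 0 < δ) (hρ : 0 < ρ) (hLpos : 0 < L)
    (S : X → EuclideanSpace ℝ (Fin q))
    (γ : ℝ → ℝ) (hγ : ContDiff ℝ 1 γ) (hγ0 : γ 0 = 0)
    -- mild solution map of the PDE, linear in the input:
    (sol : (ℝ → EuclideanSpace ℝ (Fin ℓ)) → ℝ → X)
    (hlin : ∀ ζ₁ ζ₂ : ℝ → EuclideanSpace ℝ (Fin ℓ), ∀ s : ℝ,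
      sol (ζ₁ - ζ₂) s = sol ζ₁ s - sol ζ₂ s)
    -- BIBO stability of the PDE w.r.t. S:
    (hBIBO : ∀ ζ : ℝ → EuclideanSpace ℝ (Fin ℓ), ∀ s : ℝ, 0 ≤ s →
      ‖S (sol ζ s)‖ ≤ γ (⨆ σ : Set.Icc (-h) s, ‖ζ σ‖))
    -- generalized Lipschitz property of S, with constant L for (reference x̄, radius ρ):
    (x' : X)
    (hS : ∀ x₁ x₂ : X, ‖x₁ - x'‖ < ρ → ‖x₂ - x'‖ < ρ →
      ‖S x₁ - S x₂‖ ≤ L * ‖S (x₁ - x₂)‖)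
    (ζ₁ ζ₂ : ℝ → EuclideanSpace ℝ (Fin ℓ)) (ξref : EuclideanSpace ℝ (Fin ℓ))
    (hcont₁ : Continuous ζ₁) (hcont₂ : Continuous ζ₂)
    (hagree : ∀ s : ℝ, -h ≤ s → s ≤ t → ζ₁ s = ζ₂ s)
    (hclose : ∀ s : ℝ, t ≤ s → s ≤ t + τ → ‖ζ₁ s - ξref‖ < δ ∧ ‖ζ₂ s - ξref‖ < δ)
    (hstate : ∀ s : ℝ, t ≤ s → s ≤ t + τ → ‖sol ζ₁ s - x'‖ < ρ ∧ ‖sol ζ₂ s - x'‖ < ρ) :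
    ∀ s : ℝ, t ≤ s → s ≤ t + τ →
      ‖S (sol ζ₁ s) - S (sol ζ₂ s)‖ ≤
        L * (⨆ σ : Set.Icc (0:ℝ) (2 * δ), |deriv γ σ|) *
          (⨆ σ : Set.Icc t (t + τ), ‖ζ₁ σ - ζ₂ σ‖) := by
  intro s hts hstτ
  have hs0 : (0:ℝ) ≤ s := le_trans ht hts
  have hδ2 : (0:ℝ) ≤ 2 * δ := by positivity
  have hcontd : Continuous (deriv γ) := hγ.continuous_deriv le_rfl
  set K := ⨆ σ : Set.Icc (0:ℝ) (2 * δ), |deriv γ σ| with hKdef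
  set N := ⨆ σ : Set.Icc t (t + τ), ‖ζ₁ σ - ζ₂ σ‖ with hNdef
  set M := ⨆ σ : Set.Icc (-h) s, ‖ζ₁ σ - ζ₂ σ‖ with hMdef
  haveI : Nonempty (Set.Icc (0:ℝ) (2 * δ)) := ⟨⟨0, le_refl 0, hδ2⟩⟩
  haveI : Nonempty (Set.Icc t (t + τ)) := ⟨⟨t, le_refl t, by linarith⟩⟩
  haveI : Nonempty (Set.Icc (-h) s) := ⟨⟨-h, le_refl _, by linarith⟩⟩
  have hbddK : BddAbove (Set.range fun σ : Set.Icc (0:ℝ) (2 * δ) => |deriv γ σ|) := by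
    obtain ⟨C, hC⟩ := (isCompact_Icc.image hcontd.abs).bddAbove
    exact ⟨C, by rintro _ ⟨σ, rfl⟩; exact hC (Set.mem_image_of_mem _ σ.2)⟩
  have hbddN : BddAbove (Set.range fun σ : Set.Icc t (t + τ) => ‖ζ₁ σ - ζ₂ σ‖) := by
    obtain ⟨C, hC⟩ := (isCompact_Icc.image ((hcont₁.sub hcont₂).norm)).bddAbove
    exact ⟨C, by rintro _ ⟨σ, rfl⟩; exact hC (Set.mem_image_of_mem _ σ.2)⟩
  have hbddM : BddAbove (Set.range fun σ : Set.Icc (-h) s => ‖ζ₁ σ - ζ₂ σ‖) := by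
    obtain ⟨C, hC⟩ := (isCompact_Icc.image ((hcont₁.sub hcont₂).norm)).bddAbove
    exact ⟨C, by rintro _ ⟨σ, rfl⟩; exact hC (Set.mem_image_of_mem _ σ.2)⟩
  have hK0 : 0 ≤ K := le_trans (abs_nonneg _)
    (le_ciSup hbddK ⟨0, le_refl 0, hδ2⟩)
  have hN0 : 0 ≤ N := le_trans (norm_nonneg _)
    (le_ciSup hbddN ⟨t, le_refl t, by linarith⟩)
  have hM0 : 0 ≤ M := le_trans (norm_nonneg _)
    (le_ciSup hbddM ⟨-h, le_refl _, by linarith⟩)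
  have hMN : M ≤ N := by
    apply ciSup_le
    rintro ⟨σ, hσ1, hσ2⟩
    rcases le_or_gt σ t with hc | hc
    · simp [hagree σ hσ1 hc]
      exact hN0
    · exact le_ciSup hbddN ⟨σ, le_of_lt hc, le_trans hσ2 hstτ⟩
  have hM2δ : M ≤ 2 * δ := by
    apply ciSup_le
    rintro ⟨σ, hσ1, hσ2⟩
    rcases le_or_gt σ t with hc | hc
    · simp [hagree σ hσ1 hc]; positivity
    · obtain ⟨h1, h2⟩ := hclose σ (le_of_lt hc) (le_trans hσ2 hstτ)
      calc ‖ζ₁ σ - ζ₂ σ‖ ≤ ‖ζ₁ σ - ξref‖ + ‖ζ₂ σ - ξref‖ := by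
            have := norm_sub_le (ζ₁ σ - ξref) (ζ₂ σ - ξref)
            simpa using this
        _ ≤ 2 * δ := by linarith
  -- mean value inequality: γ M ≤ K * M
  have hγM : γ M ≤ K * M := by
    have hmvt : ‖γ M - γ 0‖ ≤ K * ‖M - 0‖ := by
      apply Convex.norm_image_sub_le_of_norm_deriv_le
        (f := γ) (s := Set.Icc (0:ℝ) (2 * δ))
      · intro x _
        exact (hγ.differentiable one_ne_zero) x
      · intro x hx
        have := le_ciSup hbddK (⟨x, hx⟩ : Set.Icc (0:ℝ) (2 * δ))
        simpa [Real.norm_eq_abs] using this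
      · exact convex_Icc _ _
      · exact ⟨le_refl 0, hδ2⟩
      · exact ⟨hM0, hM2δ⟩
    rw [hγ0, sub_zero, sub_zero, Real.norm_eq_abs, Real.norm_eq_abs,
      abs_of_nonneg hM0] at hmvt
    exact le_trans (le_abs_self _) hmvt
  have hstep1 : ‖S (sol ζ₁ s) - S (sol ζ₂ s)‖ ≤ L * ‖S (sol ζ₁ s - sol ζ₂ s)‖ := by
    obtain ⟨h1, h2⟩ := hstate s hts hstτ
    exact hS _ _ h1 h2
  have hstep2 : ‖S (sol ζ₁ s - sol ζ₂ s)‖ ≤ γ M := by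
    have := hBIBO (ζ₁ - ζ₂) s hs0
    rw [hlin] at this
    simpa using this
  calc ‖S (sol ζ₁ s) - S (sol ζ₂ s)‖ ≤ L * ‖S (sol ζ₁ s - sol ζ₂ s)‖ := hstep1
    _ ≤ L * γ M := by
        exact mul_le_mul_of_nonneg_left hstep2 (le_of_lt hLpos)
    _ ≤ L * (K * M) := mul_le_mul_of_nonneg_left hγM (le_of_lt hLpos)
    _ ≤ L * (K * N) := by
        apply mul_le_mul_of_nonneg_left _ (le_of_lt hLpos)
        exact mul_le_mul_of_nonneg_left hMN hK0
    _ = L * K * N := by ring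
end

section
/- Let k : [0,∞) → ℝ be defined along a trajectory by k(t) = 1/(1 − φ(t)²‖e(t)‖²), where φ ∈ Φ₁ and e is continuous with φ(t)‖e(t)‖ < 1 for all t ≥ 0. If there exists ε > 0 such that ‖e(t)‖ ≤ φ(t)^{−1} − ε for all t > 0 and φ is bounded by Φ := sup φ, then k is bounded: k(t) ≤ 1/(εφ(t)(2 − εφ(t))) ≤ 1/(εφ(t)) ≤ 1/(ε·inf_{t>0}φ̄) for a positive lower bound φ̄, hence sup_{t≥0} k(t) < ∞. -/
/-- if the error `e` evolves strictly inside the funnel and is uniformly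
bounded away from the funnel boundary (`‖e(t)‖ ≤ φ(t)⁻¹ - ε`), where `φ ∈ Φ₁` (i.e. `φ` is
`C¹`, bounded, positive for `t > 0` and `liminf_{t→∞} φ(t) > 0`), then the funnel gain
`k(t) = 1/(1 - φ(t)²‖e(t)‖²)` is bounded. -/
theorem funnel_gain_bounded
    {m : ℕ} (φ : ℝ → ℝ) (e : ℝ → EuclideanSpace ℝ (Fin m))
    (hφC1 : ContDiff ℝ 1 φ)
    (hφbdd : ∃ M : ℝ, ∀ t : ℝ, 0 ≤ t → |φ t| ≤ M)
    (hφpos : ∀ t : ℝ, 0 < t → 0 < φ t)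
    (hφliminf : 0 < Filter.liminf φ Filter.atTop)
    (he : Continuous e)
    (hfunnel : ∀ t : ℝ, 0 ≤ t → φ t * ‖e t‖ < 1)
    (ε : ℝ) (hε : 0 < ε)
    (haway : ∀ t : ℝ, 0 < t → ‖e t‖ ≤ (φ t)⁻¹ - ε) :
    ∃ K : ℝ, ∀ t : ℝ, 0 ≤ t → 1 / (1 - φ t ^ 2 * ‖e t‖ ^ 2) ≤ K := by
  obtain ⟨M, hM⟩ := hφbdd
  set L := Filter.liminf φ Filter.atTop with hL
  -- φ is eventually ≥ L/2
  have hbdd : Filter.IsBoundedUnder (· ≥ ·) Filter.atTop φ := by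
    refine ⟨-M, Filter.eventually_map.mpr ?_⟩
    filter_upwards [Filter.eventually_ge_atTop (0:ℝ)] with t ht
    exact (abs_le.mp (hM t ht)).1
  have hev : ∀ᶠ t in Filter.atTop, L / 2 < φ t :=
    Filter.eventually_lt_of_lt_liminf (by linarith) hbdd
  obtain ⟨T₀, hT₀⟩ := Filter.eventually_atTop.mp hev
  set T : ℝ := max T₀ 1 with hTdef
  have hT1 : (0:ℝ) ≤ T := le_trans zero_le_one (le_max_right _ _)
  -- φ 0 ≥ 0
  have hφ0 : 0 ≤ φ 0 := by
    have htend : Filter.Tendsto φ (nhdsWithin 0 (Set.Ioi 0)) (nhds (φ 0)) :=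
      (hφC1.continuous.tendsto 0).mono_left nhdsWithin_le_nhds
    exact ge_of_tendsto htend
      (eventually_nhdsWithin_of_forall fun t ht => (hφpos t ht).le)
  have hφnn : ∀ t : ℝ, 0 ≤ t → 0 ≤ φ t := by
    intro t ht
    rcases ht.eq_or_lt with h | h
    · exact h ▸ hφ0
    · exact (hφpos t h).le
  -- the denominator function
  set g : ℝ → ℝ := fun t => 1 - φ t ^ 2 * ‖e t‖ ^ 2 with hg
  have hgcont : Continuous g := by
    have hφc := hφC1.continuous
    simp only [hg]
    fun_prop
  have hgpos : ∀ t : ℝ, 0 ≤ t → 0 < g t := by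
    intro t ht
    have h1 : φ t * ‖e t‖ < 1 := hfunnel t ht
    have h2 : 0 ≤ φ t * ‖e t‖ := mul_nonneg (hφnn t ht) (norm_nonneg _)
    have h3 : (φ t * ‖e t‖) ^ 2 < 1 := by nlinarith
    simp only [hg]
    nlinarith
  -- min on [0, T]
  obtain ⟨t₀, ht₀mem, ht₀min⟩ :=
    isCompact_Icc.exists_isMinOn (Set.nonempty_Icc.mpr hT1) hgcont.continuousOn
    (f := g) (s := Set.Icc 0 T)
  have hδpos : 0 < g t₀ := hgpos t₀ ht₀mem.1
  -- bound on [T, ∞)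
  have htail : ∀ t : ℝ, T ≤ t → ε * (L / 2) ≤ g t := by
    intro t ht
    have htpos : 0 < t := lt_of_lt_of_le (lt_of_lt_of_le one_pos (le_max_right T₀ 1)) ht
    have hφt : 0 < φ t := hφpos t htpos
    have hφL : L / 2 < φ t := hT₀ t (le_trans (le_max_left T₀ 1) ht)
    have h1 : φ t * ‖e t‖ ≤ 1 - ε * φ t := by
      have := haway t htpos
      have := mul_le_mul_of_nonneg_left this hφt.le
      rw [mul_sub, mul_inv_cancel₀ hφt.ne'] at this
      linarith [this, mul_comm (φ t) ε]
    have h2 : 0 ≤ φ t * ‖e t‖ := mul_nonneg hφt.le (norm_nonneg _)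
    have h3 : ε * φ t ≤ 1 := by nlinarith
    have h4 : 1 - (φ t * ‖e t‖) ^ 2 ≥ ε * φ t := by
      nlinarith [mul_nonneg h2 (by nlinarith [mul_pos hε hφt] : (0:ℝ) ≤ 1 - φ t * ‖e t‖)]
    have h5 : ε * (L / 2) ≤ ε * φ t := by nlinarith
    simp only [hg]
    nlinarith
  have hεL : 0 < ε * (L / 2) := by positivity
  refine ⟨max (1 / g t₀) (1 / (ε * (L / 2))), fun t ht => ?_⟩
  rcases le_total t T with hcase | hcase
  · refine le_trans ?_ (le_max_left _ _)
    have := ht₀min (Set.mem_Icc.mpr ⟨ht, hcase⟩)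
    exact one_div_le_one_div_of_le hδpos this
  · refine le_trans ?_ (le_max_right _ _)
    exact one_div_le_one_div_of_le hεL (htail t hcase)
end
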